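/- The single-user (near-optimal) allocation τ_m = 1, P_m = P̄ with m = argmax_j f_j(P̄) achieves a value within the gap between the pointwise maximum h(P) = max_j f_j(P) and its concave envelope at P̄; in particular it is exactly optimal whenever P̄ lies in an interval where the concave envelope of h coincides with h. -/

import Mathlib

lemma concave_log_aff {c : ℝ} (hc : 0 < c) :
    ConcaveOn ℝ (Set.Ici 0) (fun y : ℝ => Real.log (1 + c * y)) := by
  have hlog := strictConcaveOn_log_Ioi.concaveOn
  have haff := hlog.comp_affineMap (AffineMap.lineMap (1 : ℝ) (1 + c))
  have hsub : Set.Ici (0:ℝ) ⊆ (AffineMap.lineMap (1 : ℝ) (1 + c)) ⁻¹' Set.Ioi 0 := by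
    intro y hy
    simp only [Set.mem_preimage, AffineMap.lineMap_apply, Set.mem_Ioi]
    have hy' : (0:ℝ) ≤ y := hy
    have : (0:ℝ) ≤ c * y := mul_nonneg hc.le hy'
    simp only [smul_eq_mul, vsub_eq_sub, vadd_eq_add]
    nlinarith
  have h2 : ConcaveOn ℝ (Set.Ici (0:ℝ)) (Real.log ∘ AffineMap.lineMap (1 : ℝ) (1 + c)) :=
    haff.subset hsub (convex_Ici 0)
  convert h2 using 2 with y
  simp only [Function.comp_apply, AffineMap.lineMap_apply, smul_eq_mul, vsub_eq_sub,
    vadd_eq_add]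
  ring_nf

lemma concave_mono (g : ℝ → ℝ) (hg : ConcaveOn ℝ (Set.Ici 0) g)
    (h0 : ∀ y : ℝ, 0 ≤ y → 0 ≤ g y) {x z : ℝ} (hx : 0 ≤ x) (hxz : x ≤ z) :
    g x ≤ g z := by
  by_contra hlt
  push_neg at hlt
  have hxz' : x < z := by
    rcases eq_or_lt_of_le hxz with h | h
    · exact absurd (h ▸ hlt) (lt_irrefl _)
    · exact h
  set d : ℝ := g x - g z with hd
  have hdpos : 0 < d := by simp only [hd]; linarith
  set t : ℝ := z - x with ht
  have htpos : 0 < t := by simp only [ht]; linarith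
  have hgz : 0 ≤ g z := h0 z (le_trans hx hxz)
  set c : ℝ := g z + 1 with hc
  have hcpos : 0 < c := by positivity
  set y : ℝ := z + t * c / d with hy
  have hyz : z < y := by
    have : 0 < t * c / d := by positivity
    simp only [hy]; linarith
  have hy0 : (0:ℝ) ≤ y := le_trans (le_trans hx hxz) hyz.le
  set a : ℝ := c / (c + d) with ha
  set b : ℝ := d / (c + d) with hb
  have hcd : 0 < c + d := by positivity
  have ha0 : 0 ≤ a := by positivity
  have hb0 : 0 ≤ b := by positivity
  have hab : a + b = 1 := by rw [ha, hb, ← add_div, div_self hcd.ne']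
  have hcomb : a • x + b • y = z := by
    simp only [smul_eq_mul, ha, hb, hy]
    field_simp
    ring
  have hconc := hg.2 (Set.mem_Ici.2 hx) (Set.mem_Ici.2 hy0) ha0 hb0 hab
  rw [hcomb] at hconc
  simp only [smul_eq_mul] at hconc
  have hgy : 0 ≤ g y := h0 y hy0
  have key : b * g y ≤ -b := by
    have hgx : g x = g z + d := by simp [hd]
    have h1 : a * (g z + d) + b * g y ≤ g z := by rw [← hgx]; exact hconc
    have h2 : a * d = b * c := by
      simp only [ha, hb]; field_simp
    nlinarith
  have hbpos : 0 < b := by positivity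
  nlinarith

lemma concave_sum_log {n : ℕ} (ω η : Fin n → ℝ) (hω : ∀ j, 0 < ω j) (hη : ∀ j, 0 < η j) :
    ConcaveOn ℝ (Set.Ici 0) (fun y : ℝ => ∑ j, ω j * Real.log (1 + η j * y)) := by
  classical
  have H : ∀ s : Finset (Fin n),
      ConcaveOn ℝ (Set.Ici 0) (fun y : ℝ => ∑ j ∈ s, ω j * Real.log (1 + η j * y)) := by
    intro s
    induction s using Finset.induction_on with
    | empty => simpa using concaveOn_const (0:ℝ) (convex_Ici 0)
    | insert a s' hnotmem ih =>
      have h1 := (concave_log_aff (hη a)).smul (hω a).le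
      have h2 := h1.add ih
      simp only [smul_eq_mul] at h2
      replace h2 : ConcaveOn ℝ (Set.Ici (0:ℝ)) ((fun x => ω a * Real.log (1 + η a * x)) +
          fun y => ∑ j ∈ s', ω j * Real.log (1 + η j * y)) := h2
      convert h2 using 2 with y
      rw [Finset.sum_insert hnotmem]
      simp [Pi.add_apply]
  exact H Finset.univ

lemma main_bound {n : ℕ} (ω η : Fin n → ℝ)
    (hω : ∀ j, 0 < ω j) (hη : ∀ j, 0 < η j) (Pbar : ℝ) (hP : 0 < Pbar) (m : Fin n)
    (τ P : Fin n → ℝ)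
    (hτ0 : ∀ j, 0 ≤ τ j) (hτ1 : (∑ j, τ j) = 1) (hP0 : ∀ j, 0 ≤ P j)
    (hPc : (∑ j, τ j * P j) ≤ Pbar)
    (g : ℝ → ℝ) (hg : ConcaveOn ℝ (Set.Ici 0) g)
    (hmaj : ∀ y, 0 ≤ y → ∀ j, ω j * Real.log (1 + η j * y) ≤ g y) :
    ∑ j, τ j * (ω j * Real.log (1 + η j * P j)) ≤ g Pbar := by
  have hgnonneg : ∀ y : ℝ, 0 ≤ y → 0 ≤ g y := by
    intro y hy
    refine le_trans ?_ (hmaj y hy m)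
    have h1 : (1:ℝ) ≤ 1 + η m * y := by nlinarith [(hη m).le, mul_nonneg (hη m).le hy]
    exact mul_nonneg (hω m).le (Real.log_nonneg h1)
  have step1 : ∑ j, τ j * (ω j * Real.log (1 + η j * P j)) ≤ ∑ j, τ j * g (P j) := by
    apply Finset.sum_le_sum
    intro j _
    exact mul_le_mul_of_nonneg_left (hmaj (P j) (hP0 j) j) (hτ0 j)
  have step2 : ∑ j, τ j * g (P j) ≤ g (∑ j, τ j * P j) := by
    have := hg.le_map_sum (t := Finset.univ) (w := τ) (p := P)
      (fun i _ => hτ0 i) hτ1 (fun i _ => Set.mem_Ici.2 (hP0 i))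
    simpa [smul_eq_mul] using this
  have hs0 : (0:ℝ) ≤ ∑ j, τ j * P j :=
    Finset.sum_nonneg fun j _ => mul_nonneg (hτ0 j) (hP0 j)
  have step3 : g (∑ j, τ j * P j) ≤ g Pbar := concave_mono g hg hgnonneg hs0 hPc
  linarith

/-- The single-user allocation (τ_m = 1, P_m = P̄, m the argmax of f_j(P̄)) achieves
the value h(P̄) = max_j f_j(P̄); every feasible allocation is bounded by the concave
envelope of h at P̄; hence the single-user allocation is exactly optimal whenever the
concave envelope coincides with h at P̄. -/
theorem stmt_11 {n : ℕ} (hn : 0 < n) (ω η : Fin n → ℝ)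
    (hω : ∀ j, 0 < ω j) (hη : ∀ j, 0 < η j) (Pbar : ℝ) (hP : 0 < Pbar)
    (m : Fin n)
    (hm : ∀ j, ω j * Real.log (1 + η j * Pbar) ≤ ω m * Real.log (1 + η m * Pbar)) :
    (∃ τ P : Fin n → ℝ,
      (∀ j, 0 ≤ τ j) ∧ (∑ j, τ j) = 1 ∧ (∀ j, 0 ≤ P j) ∧ (∑ j, τ j * P j) ≤ Pbar ∧
      ∑ j, τ j * (ω j * Real.log (1 + η j * P j)) = ω m * Real.log (1 + η m * Pbar)) ∧
    (∀ τ P : Fin n → ℝ,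
      (∀ j, 0 ≤ τ j) → (∑ j, τ j) = 1 → (∀ j, 0 ≤ P j) → (∑ j, τ j * P j) ≤ Pbar →
      ∑ j, τ j * (ω j * Real.log (1 + η j * P j))
        ≤ sInf {v : ℝ | ∃ g : ℝ → ℝ, ConcaveOn ℝ (Set.Ici 0) g ∧
            (∀ y, 0 ≤ y → ∀ j, ω j * Real.log (1 + η j * y) ≤ g y) ∧ v = g Pbar}) ∧
    ((sInf {v : ℝ | ∃ g : ℝ → ℝ, ConcaveOn ℝ (Set.Ici 0) g ∧
        (∀ y, 0 ≤ y → ∀ j, ω j * Real.log (1 + η j * y) ≤ g y) ∧ v = g Pbar})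
        = ω m * Real.log (1 + η m * Pbar) →
      ∀ τ P : Fin n → ℝ,
        (∀ j, 0 ≤ τ j) → (∑ j, τ j) = 1 → (∀ j, 0 ≤ P j) → (∑ j, τ j * P j) ≤ Pbar →
        ∑ j, τ j * (ω j * Real.log (1 + η j * P j)) ≤ ω m * Real.log (1 + η m * Pbar)) := by
  classical
  have hbound : ∀ τ P : Fin n → ℝ,
      (∀ j, 0 ≤ τ j) → (∑ j, τ j) = 1 → (∀ j, 0 ≤ P j) → (∑ j, τ j * P j) ≤ Pbar →
      ∑ j, τ j * (ω j * Real.log (1 + η j * P j))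
        ≤ sInf {v : ℝ | ∃ g : ℝ → ℝ, ConcaveOn ℝ (Set.Ici 0) g ∧
            (∀ y, 0 ≤ y → ∀ j, ω j * Real.log (1 + η j * y) ≤ g y) ∧ v = g Pbar} := by
    intro τ P hτ0 hτ1 hP0 hPc
    apply le_csInf
    · refine ⟨(fun y => ∑ j, ω j * Real.log (1 + η j * y)) Pbar,
        (fun y => ∑ j, ω j * Real.log (1 + η j * y)),
        concave_sum_log ω η hω hη, ?_, rfl⟩
      intro y hy j
      apply Finset.single_le_sum (f := fun j => ω j * Real.log (1 + η j * y))
        (fun i _ => ?_) (Finset.mem_univ j)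
      have h1 : (1:ℝ) ≤ 1 + η i * y := by nlinarith [(hη i).le, mul_nonneg (hη i).le hy]
      exact mul_nonneg (hω i).le (Real.log_nonneg h1)
    · rintro v ⟨g, hg, hmaj, rfl⟩
      exact main_bound ω η hω hη Pbar hP m τ P hτ0 hτ1 hP0 hPc g hg hmaj
  refine ⟨?_, hbound, ?_⟩
  · refine ⟨(fun j => if j = m then 1 else 0), (fun _ => Pbar), ?_, ?_, ?_, ?_, ?_⟩
    · intro j; by_cases h : j = m <;> simp [h]
    · simp
    · intro j; exact hP.le
    · simp [ite_mul]
    · simp [ite_mul]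
  · intro hs τ P h1 h2 h3 h4
    have := hbound τ P h1 h2 h3 h4
    rwa [hs] at this
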